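/- Suppose N : V → V' satisfies Assumption (N) with n = 1 and data (C_N, ζ₁, ζ₂, δ₁, δ₂), so ζ₂ + δ₂ < 1 and δ₁ + δ₂ ≥ 1. Let T > 0, I = (0,T), B > 0, and let w₁, w₂ : I → V be strongly measurable with ‖wᵢ‖_{L²(I,V)} ≤ B and ess sup_{t∈I} ‖wᵢ(t)‖_H ≤ B for i = 1,2. Then there exists a constant C ≥ 0, depending only on C_N, ζ₁, ζ₂, δ₁, δ₂ and B, such that ‖ N∘w₁ − N∘w₂ ‖_{L²(I,V')} ≤ C·‖ w₁ − w₂ ‖_{L²(I,H)}^{1 − ζ₂ − δ₂}, where ‖w₁ − w₂‖_{L²(I,H)} is the L² norm of t ↦ ‖w₁(t) − w₂(t)‖_H. (The continuity estimate for the Nemytskii operator of the nonlinearity proved in Section 3.3 of the paper in the Galerkin limit argument.) -/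

import Mathlib

open MeasureTheory
open scoped ENNReal NNReal

lemma aux_holder {α : Type*} [MeasurableSpace α] (μ : Measure α) (f h : α → ℝ)
    (hf : AEMeasurable f μ) (hh : AEMeasurable h μ)
    (hf0 : ∀ t, 0 ≤ f t) (hh0 : ∀ t, 0 ≤ h t)
    (σ θ : ℝ) (hσ : 0 ≤ σ) (hθ : 0 < θ) (hsum : σ + θ = 1) :
    eLpNorm (fun t => f t ^ σ * h t ^ θ) 2 μ
      ≤ (eLpNorm f 2 μ) ^ σ * (eLpNorm h 2 μ) ^ θ := by
  have h2 : ((2 : ℝ≥0∞)).toReal = (2 : ℝ) := by norm_num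
  set F : α → ℝ≥0∞ := fun t => ENNReal.ofReal (f t) with hF
  set Hh : α → ℝ≥0∞ := fun t => ENNReal.ofReal (h t) with hHh
  have hFm : AEMeasurable F μ := hf.ennreal_ofReal
  have hHm : AEMeasurable Hh μ := hh.ennreal_ofReal
  have hfe : eLpNorm f 2 μ = (∫⁻ t, F t ^ (2:ℝ) ∂μ) ^ (1/2 : ℝ) := by
    rw [eLpNorm_eq_lintegral_rpow_enorm_toReal (by norm_num) (by norm_num), h2]
    congr 1
    refine lintegral_congr fun t => ?_
    rw [Real.enorm_eq_ofReal (hf0 t)]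
  have hhe : eLpNorm h 2 μ = (∫⁻ t, Hh t ^ (2:ℝ) ∂μ) ^ (1/2 : ℝ) := by
    rw [eLpNorm_eq_lintegral_rpow_enorm_toReal (by norm_num) (by norm_num), h2]
    congr 1
    refine lintegral_congr fun t => ?_
    rw [Real.enorm_eq_ofReal (hh0 t)]
  have hge : eLpNorm (fun t => f t ^ σ * h t ^ θ) 2 μ
      = (∫⁻ t, (F t ^ σ * Hh t ^ θ) ^ (2:ℝ) ∂μ) ^ (1/2 : ℝ) := by
    rw [eLpNorm_eq_lintegral_rpow_enorm_toReal (by norm_num) (by norm_num), h2]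
    congr 1
    refine lintegral_congr fun t => ?_
    rw [Real.enorm_eq_ofReal (mul_nonneg (Real.rpow_nonneg (hf0 t) _)
      (Real.rpow_nonneg (hh0 t) _)),
      ENNReal.ofReal_mul (Real.rpow_nonneg (hf0 t) _),
      ← ENNReal.ofReal_rpow_of_nonneg (hf0 t) hσ,
      ← ENNReal.ofReal_rpow_of_nonneg (hh0 t) hθ.le]
  have key : ∫⁻ t, (F t ^ σ * Hh t ^ θ) ^ (2:ℝ) ∂μ
      ≤ (∫⁻ t, F t ^ (2:ℝ) ∂μ) ^ σ * (∫⁻ t, Hh t ^ (2:ℝ) ∂μ) ^ θ := by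
    rcases eq_or_lt_of_le hσ with hσ0 | hσpos
    · have hθ1 : θ = 1 := by linarith
      subst hθ1
      simp only [← hσ0, ENNReal.rpow_zero, one_mul, ENNReal.rpow_one]
      exact le_of_eq rfl
    · have hpq : Real.HolderConjugate (1/σ) (1/θ) := by
        constructor
        · rw [one_div, one_div, inv_inv, inv_inv, inv_one]; exact hsum
        · positivity
        · positivity
      have step : ∀ t, (F t ^ σ * Hh t ^ θ) ^ (2:ℝ)
          = (F t ^ (σ * 2)) * (Hh t ^ (θ * 2)) := fun t => by
        rw [ENNReal.mul_rpow_of_nonneg _ _ (by norm_num : (0:ℝ) ≤ 2),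
          ← ENNReal.rpow_mul, ← ENNReal.rpow_mul]
      calc ∫⁻ t, (F t ^ σ * Hh t ^ θ) ^ (2:ℝ) ∂μ
          = ∫⁻ t, ((fun t => F t ^ (σ*2)) * (fun t => Hh t ^ (θ*2))) t ∂μ := by
            refine lintegral_congr fun t => ?_; exact step t
        _ ≤ (∫⁻ t, (F t ^ (σ*2)) ^ (1/σ) ∂μ) ^ (1/(1/σ)) *
              (∫⁻ t, (Hh t ^ (θ*2)) ^ (1/θ) ∂μ) ^ (1/(1/θ)) :=
            ENNReal.lintegral_mul_le_Lp_mul_Lq μ hpq (hFm.pow_const _) (hHm.pow_const _)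
        _ = (∫⁻ t, F t ^ (2:ℝ) ∂μ) ^ σ * (∫⁻ t, Hh t ^ (2:ℝ) ∂μ) ^ θ := by
            rw [one_div_one_div, one_div_one_div]
            congr 1
            · congr 1
              refine lintegral_congr fun t => ?_
              rw [← ENNReal.rpow_mul]
              congr 1
              field_simp
            · congr 1
              refine lintegral_congr fun t => ?_
              rw [← ENNReal.rpow_mul]
              congr 1
              field_simp
  rw [hge, hfe, hhe]
  calc (∫⁻ t, (F t ^ σ * Hh t ^ θ) ^ (2:ℝ) ∂μ) ^ (1/2 : ℝ)
      ≤ ((∫⁻ t, F t ^ (2:ℝ) ∂μ) ^ σ * (∫⁻ t, Hh t ^ (2:ℝ) ∂μ) ^ θ) ^ (1/2:ℝ) :=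
        ENNReal.rpow_le_rpow key (by norm_num)
    _ = ((∫⁻ t, F t ^ (2:ℝ) ∂μ) ^ (1/2:ℝ)) ^ σ * ((∫⁻ t, Hh t ^ (2:ℝ) ∂μ) ^ (1/2:ℝ)) ^ θ := by
        rw [ENNReal.mul_rpow_of_nonneg _ _ (by norm_num : (0:ℝ) ≤ 1/2),
          ← ENNReal.rpow_mul, ← ENNReal.rpow_mul, ← ENNReal.rpow_mul, ← ENNReal.rpow_mul,
          mul_comm σ (1/2 : ℝ), mul_comm θ (1/2 : ℝ)]

/-- Continuity estimate for the Nemytskii operator of the nonlinearity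
(Galerkin limit argument in Section 3.3 of the paper). -/
theorem stmt17
    {H V : Type*}
    [NormedAddCommGroup H] [InnerProductSpace ℝ H] [CompleteSpace H]
    [NormedAddCommGroup V] [InnerProductSpace ℝ V] [CompleteSpace V]
    (ι : V →L[ℝ] H) (hι : Function.Injective ι) (hdense : DenseRange ι)
    (N : V → (V →L[ℝ] ℝ))
    (CN ζ₁ ζ₂ δ₁ δ₂ : ℝ)
    (hCN : 0 ≤ CN) (hζ₁ : 0 ≤ ζ₁) (hζ₂ : 0 ≤ ζ₂) (hδ₁ : 0 ≤ δ₁) (hδ₂ : 0 ≤ δ₂)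
    (hlt : ζ₂ + δ₂ < 1) (hge : 1 ≤ δ₁ + δ₂)
    (hN : ∀ y₁ y₂ : V,
      ‖N y₁ - N y₂‖ ≤ CN * (‖ι y₁‖ ^ ζ₁ * ‖y₁‖ ^ ζ₂ + ‖ι y₂‖ ^ ζ₁ * ‖y₂‖ ^ ζ₂) *
        (‖ι (y₁ - y₂)‖ ^ δ₁ * ‖y₁ - y₂‖ ^ δ₂))
    (T : ℝ) (hT : 0 < T) (B : ℝ) (hB : 0 < B) :
    ∃ C : ℝ, 0 ≤ C ∧ ∀ w₁ w₂ : ℝ → V,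
      AEStronglyMeasurable w₁ (volume.restrict (Set.Ioo 0 T)) →
      AEStronglyMeasurable w₂ (volume.restrict (Set.Ioo 0 T)) →
      eLpNorm w₁ 2 (volume.restrict (Set.Ioo 0 T)) ≤ ENNReal.ofReal B →
      eLpNorm w₂ 2 (volume.restrict (Set.Ioo 0 T)) ≤ ENNReal.ofReal B →
      (∀ᵐ t ∂(volume.restrict (Set.Ioo 0 T)), ‖ι (w₁ t)‖ ≤ B) →
      (∀ᵐ t ∂(volume.restrict (Set.Ioo 0 T)), ‖ι (w₂ t)‖ ≤ B) →
      eLpNorm (fun t => N (w₁ t) - N (w₂ t)) 2 (volume.restrict (Set.Ioo 0 T))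
        ≤ ENNReal.ofReal C *
          eLpNorm (fun t => ι (w₁ t) - ι (w₂ t)) 2 (volume.restrict (Set.Ioo 0 T))
            ^ (1 - ζ₂ - δ₂) := by
  set μ := volume.restrict (Set.Ioo (0:ℝ) T) with hμ
  set σ : ℝ := ζ₂ + δ₂ with hσdef
  set θ : ℝ := 1 - ζ₂ - δ₂ with hθdef
  have hσ0 : 0 ≤ σ := add_nonneg hζ₂ hδ₂
  have hθpos : 0 < θ := by simp only [hθdef]; linarith
  have hθ1 : θ ≤ 1 := by simp only [hθdef]; linarith
  have hδθ : 0 ≤ δ₁ - θ := by simp only [hθdef]; linarith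
  have h2B : (0:ℝ) < 2 * B := by linarith
  set K : ℝ := 2 * CN * B ^ ζ₁ * (2 * B) ^ (δ₁ - θ) with hKdef
  have hK0 : 0 ≤ K := by
    apply mul_nonneg (mul_nonneg (by linarith) (Real.rpow_nonneg hB.le _))
      (Real.rpow_nonneg h2B.le _)
  refine ⟨K * (2 * B) ^ σ, mul_nonneg hK0 (Real.rpow_nonneg h2B.le _), ?_⟩
  intro w₁ w₂ hw₁ hw₂ hL1 hL2 hb1 hb2
  set f : ℝ → ℝ := fun t => ‖w₁ t‖ + ‖w₂ t‖ with hfdef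
  set h : ℝ → ℝ := fun t => ‖ι (w₁ t) - ι (w₂ t)‖ with hhdef
  have hf0 : ∀ t, 0 ≤ f t := fun t => add_nonneg (norm_nonneg _) (norm_nonneg _)
  have hh0 : ∀ t, 0 ≤ h t := fun t => norm_nonneg _
  have hfm : AEMeasurable f μ := (hw₁.norm.add hw₂.norm).aemeasurable
  have hvm : AEStronglyMeasurable (fun t => ι (w₁ t) - ι (w₂ t)) μ :=
    ((ι.continuous.comp_aestronglyMeasurable hw₁).sub
      (ι.continuous.comp_aestronglyMeasurable hw₂))
  have hhm : AEMeasurable h μ := hvm.norm.aemeasurable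
  -- pointwise bound
  have ptwise : ∀ᵐ t ∂μ, ‖N (w₁ t) - N (w₂ t)‖ ≤ K * (f t ^ σ * h t ^ θ) := by
    filter_upwards [hb1, hb2] with t h1 h2
    have hE : ‖ι (w₁ t - w₂ t)‖ = h t := by rw [map_sub]
    have hf1 : ‖w₁ t‖ ≤ f t := le_add_of_nonneg_right (norm_nonneg _)
    have hf2 : ‖w₂ t‖ ≤ f t := le_add_of_nonneg_left (norm_nonneg _)
    have A1 : ‖ι (w₁ t)‖ ^ ζ₁ ≤ B ^ ζ₁ := Real.rpow_le_rpow (norm_nonneg _) h1 hζ₁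
    have A2 : ‖ι (w₂ t)‖ ^ ζ₁ ≤ B ^ ζ₁ := Real.rpow_le_rpow (norm_nonneg _) h2 hζ₁
    have B1 : ‖w₁ t‖ ^ ζ₂ ≤ f t ^ ζ₂ := Real.rpow_le_rpow (norm_nonneg _) hf1 hζ₂
    have B2 : ‖w₂ t‖ ^ ζ₂ ≤ f t ^ ζ₂ := Real.rpow_le_rpow (norm_nonneg _) hf2 hζ₂
    have D : ‖w₁ t - w₂ t‖ ^ δ₂ ≤ f t ^ δ₂ :=
      Real.rpow_le_rpow (norm_nonneg _) (norm_sub_le _ _) hδ₂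
    have hle2B : h t ≤ 2 * B := by
      calc h t ≤ ‖ι (w₁ t)‖ + ‖ι (w₂ t)‖ := norm_sub_le _ _
        _ ≤ 2 * B := by linarith
    have E : h t ^ δ₁ = h t ^ θ * h t ^ (δ₁ - θ) := by
      rw [← Real.rpow_add_of_nonneg (hh0 t) hθpos.le hδθ]
      ring_nf
    have E2 : h t ^ (δ₁ - θ) ≤ (2 * B) ^ (δ₁ - θ) :=
      Real.rpow_le_rpow (hh0 t) hle2B hδθ
    have F2 : f t ^ ζ₂ * f t ^ δ₂ = f t ^ σ :=
      (Real.rpow_add_of_nonneg (hf0 t) hζ₂ hδ₂).symm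
    have S_le : ‖ι (w₁ t)‖ ^ ζ₁ * ‖w₁ t‖ ^ ζ₂ + ‖ι (w₂ t)‖ ^ ζ₁ * ‖w₂ t‖ ^ ζ₂
        ≤ 2 * (B ^ ζ₁ * f t ^ ζ₂) := by
      have t1 : ‖ι (w₁ t)‖ ^ ζ₁ * ‖w₁ t‖ ^ ζ₂ ≤ B ^ ζ₁ * f t ^ ζ₂ :=
        mul_le_mul A1 B1 (Real.rpow_nonneg (norm_nonneg _) _) (Real.rpow_nonneg hB.le _)
      have t2 : ‖ι (w₂ t)‖ ^ ζ₁ * ‖w₂ t‖ ^ ζ₂ ≤ B ^ ζ₁ * f t ^ ζ₂ :=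
        mul_le_mul A2 B2 (Real.rpow_nonneg (norm_nonneg _) _) (Real.rpow_nonneg hB.le _)
      linarith
    have P_le : ‖ι (w₁ t - w₂ t)‖ ^ δ₁ * ‖w₁ t - w₂ t‖ ^ δ₂
        ≤ (h t ^ θ * (2 * B) ^ (δ₁ - θ)) * f t ^ δ₂ := by
      rw [hE, E]
      exact mul_le_mul (mul_le_mul_of_nonneg_left E2 (Real.rpow_nonneg (hh0 t) _)) D
        (Real.rpow_nonneg (norm_nonneg _) _)
        (mul_nonneg (Real.rpow_nonneg (hh0 t) _) (Real.rpow_nonneg h2B.le _))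
    calc ‖N (w₁ t) - N (w₂ t)‖
        ≤ CN * (‖ι (w₁ t)‖ ^ ζ₁ * ‖w₁ t‖ ^ ζ₂ + ‖ι (w₂ t)‖ ^ ζ₁ * ‖w₂ t‖ ^ ζ₂) *
          (‖ι (w₁ t - w₂ t)‖ ^ δ₁ * ‖w₁ t - w₂ t‖ ^ δ₂) := hN _ _
      _ ≤ CN * (2 * (B ^ ζ₁ * f t ^ ζ₂)) * ((h t ^ θ * (2 * B) ^ (δ₁ - θ)) * f t ^ δ₂) := by
          apply mul_le_mul (mul_le_mul_of_nonneg_left S_le hCN) P_le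
          · exact mul_nonneg (Real.rpow_nonneg (norm_nonneg _) _)
              (Real.rpow_nonneg (norm_nonneg _) _)
          · exact mul_nonneg hCN (by positivity)
      _ = K * (f t ^ σ * h t ^ θ) := by
          rw [← F2, hKdef]; ring
  -- now the eLpNorm estimates
  have boundf : eLpNorm f 2 μ ≤ ENNReal.ofReal (2 * B) := by
    have tri : eLpNorm f 2 μ ≤ eLpNorm (fun t => ‖w₁ t‖) 2 μ + eLpNorm (fun t => ‖w₂ t‖) 2 μ :=
      eLpNorm_add_le hw₁.norm hw₂.norm (by norm_num)
    rw [eLpNorm_norm, eLpNorm_norm] at tri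
    calc eLpNorm f 2 μ ≤ eLpNorm w₁ 2 μ + eLpNorm w₂ 2 μ := tri
      _ ≤ ENNReal.ofReal B + ENNReal.ofReal B := add_le_add hL1 hL2
      _ = ENNReal.ofReal (2 * B) := by
          rw [two_mul, ENNReal.ofReal_add hB.le hB.le]
  have hsmul : (fun t => K * (f t ^ σ * h t ^ θ)) =
      K • (fun t => f t ^ σ * h t ^ θ) := rfl
  calc eLpNorm (fun t => N (w₁ t) - N (w₂ t)) 2 μ
      ≤ eLpNorm (fun t => K * (f t ^ σ * h t ^ θ)) 2 μ := eLpNorm_mono_ae_real ptwise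
    _ ≤ ‖K‖₊ • eLpNorm (fun t => f t ^ σ * h t ^ θ) 2 μ := by
        rw [hsmul]; exact eLpNorm_const_smul_le
    _ = ENNReal.ofReal K * eLpNorm (fun t => f t ^ σ * h t ^ θ) 2 μ := by
        rw [ENNReal.smul_def, smul_eq_mul, ← enorm_eq_nnnorm, Real.enorm_eq_ofReal hK0]
    _ ≤ ENNReal.ofReal K * ((eLpNorm f 2 μ) ^ σ * (eLpNorm h 2 μ) ^ θ) :=
        mul_le_mul_right (aux_holder μ f h hfm hhm hf0 hh0 σ θ hσ0 hθpos (by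
          simp only [hσdef, hθdef]; ring)) _
    _ ≤ ENNReal.ofReal K * ((ENNReal.ofReal (2 * B)) ^ σ * (eLpNorm h 2 μ) ^ θ) := by
        exact mul_le_mul_right (mul_le_mul_left (ENNReal.rpow_le_rpow boundf hσ0) _) _
    _ = ENNReal.ofReal (K * (2 * B) ^ σ) *
          eLpNorm (fun t => ι (w₁ t) - ι (w₂ t)) 2 μ ^ (1 - ζ₂ - δ₂) := by
        rw [ENNReal.ofReal_mul hK0, ENNReal.ofReal_rpow_of_pos h2B]
        rw [hhdef] at *
        rw [eLpNorm_norm]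
        ring
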